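/- Let G be a finite group, p a prime, and P₀ < P₁ < ⋯ < Pₙ₊₁ a chain of nontrivial p-subgroups with each Pᵢ normal in Pₙ₊₁. If Pₙ₊₁ is a Sylow p-subgroup of ⋂_{i=0}^{n+1} N_G(Pᵢ), then Pₙ₊₁ is a Sylow p-subgroup of ⋂_{i=0}^{n} N_G(Pᵢ). -/

import Mathlib

/-- `Q` is a Sylow `p`-subgroup of the subgroup `H`. -/
def IsSylowIn (p : ℕ) {G : Type*} [Group G] (Q H : Subgroup G) : Prop :=
  Q ≤ H ∧ Nat.card Q = p ^ (Nat.card H).factorization p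

/-- If the top of a strict Robinson chain `P₀ < ⋯ < Pₙ₊₁` of nontrivial p-subgroups
is Sylow in the intersection of all normalizers, then it is Sylow in the
intersection of the normalizers of `P₀,…,Pₙ`. -/
theorem sylow_in_truncated_intersection
    {G : Type*} [Group G] [Finite G] {p : ℕ} [Fact p.Prime]
    {n : ℕ} (P : Fin (n + 2) → Subgroup G)
    (hmono : StrictMono P)
    (hbot : ∀ i, P i ≠ ⊥)
    (hpgrp : ∀ i, IsPGroup p (P i))
    (hnorm : ∀ i, P (Fin.last (n + 1)) ≤ Subgroup.normalizer (P i : Set G))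
    (hSyl : IsSylowIn p (P (Fin.last (n + 1))) (⨅ i, Subgroup.normalizer (P i : Set G))) :
    IsSylowIn p (P (Fin.last (n + 1)))
      (⨅ i : Fin (n + 1), Subgroup.normalizer (P i.castSucc : Set G)) := by
  classical
  set Pt := P (Fin.last (n + 1)) with hPt
  set H : Subgroup G := ⨅ i : Fin (n + 1), Subgroup.normalizer (P i.castSucc : Set G) with hH
  set N : Subgroup G := ⨅ i, Subgroup.normalizer (P i : Set G) with hN
  have hPH : Pt ≤ H := le_iInf fun i => hnorm _
  refine ⟨hPH, ?_⟩
  -- a Sylow subgroup of H containing Pt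
  have hPt' : IsPGroup p (Pt.subgroupOf H) := (hpgrp _).comap_subtype
  obtain ⟨Q, hQ⟩ := hPt'.exists_le_sylow
  have hcardQ : Nat.card Q = p ^ (Nat.card H).factorization p :=
    Q.card_eq_multiplicity
  -- push Q down to G
  set Q' : Subgroup G := Q.toSubgroup.map H.subtype with hQ'
  have hQ'card : Nat.card Q' = Nat.card Q :=
    (Nat.card_congr (Q.toSubgroup.equivMapOfInjective H.subtype
      H.subtype_injective).toEquiv).symm
  have hPQ' : Pt ≤ Q' := by
    intro x hx
    exact ⟨⟨x, hPH hx⟩, hQ (by simpa [Subgroup.mem_subgroupOf] using hx), rfl⟩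
  have hQ'H : Q' ≤ H := Subgroup.map_subtype_le _
  have hQ'p : IsPGroup p Q' := Q.isPGroup'.map _
  -- it suffices to show Pt = Q'
  suffices hPQ : Pt = Q' by
    rw [hPQ, hQ'card, hcardQ]
  by_contra hne
  have hlt : Pt < Q' := lt_of_le_of_ne hPQ' hne
  -- normalizer condition inside the p-group Q'
  have hnc : NormalizerCondition Q' :=
    @normalizerCondition_of_isNilpotent _ _ hQ'p.isNilpotent
  have hKtop : Pt.subgroupOf Q' < ⊤ := by
    rcases SetLike.exists_of_lt hlt with ⟨g, hgQ', hgP⟩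
    refine lt_top_iff_ne_top.mpr fun h => hgP ?_
    have : (⟨g, hgQ'⟩ : Q') ∈ Pt.subgroupOf Q' := h ▸ Subgroup.mem_top _
    simpa [Subgroup.mem_subgroupOf] using this
  obtain ⟨x, hxn, hxK⟩ := SetLike.exists_of_lt (hnc _ hKtop)
  set g : G := (x : G) with hg
  have hgQ' : g ∈ Q' := x.2
  have hgP : g ∉ Pt := fun h => hxK (by simpa [Subgroup.mem_subgroupOf] using h)
  -- g normalizes Pt
  have hgnorm : g ∈ Subgroup.normalizer (Pt : Set G) := by
    rw [Subgroup.mem_normalizer_iff]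
    intro h
    constructor
    · intro hh
      have : (⟨h, hPQ' hh⟩ : Q') ∈ Pt.subgroupOf Q' := by
        simpa [Subgroup.mem_subgroupOf] using hh
      have := (Subgroup.mem_normalizer_iff.mp hxn ⟨h, hPQ' hh⟩).mp this
      simpa [Subgroup.mem_subgroupOf] using this
    · intro hh
      have hmem : g * h * g⁻¹ ∈ Q' := hPQ' hh
      have hmemh : h ∈ Q' := by
        have := Q'.mul_mem (Q'.mul_mem (Q'.inv_mem hgQ') hmem) hgQ'
        simpa [mul_assoc] using this
      have h1 : (x * ⟨h, hmemh⟩ * x⁻¹ : Q') ∈ Pt.subgroupOf Q' := by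
        simpa [Subgroup.mem_subgroupOf] using hh
      have := (Subgroup.mem_normalizer_iff.mp hxn ⟨h, hmemh⟩).mpr h1
      simpa [Subgroup.mem_subgroupOf] using this
  -- g lies in N
  have hgN : g ∈ N := by
    rw [hN, Subgroup.mem_iInf]
    intro i
    induction i using Fin.lastCases with
    | last => exact hgnorm
    | cast j =>
      have : g ∈ H := hQ'H hgQ'
      rw [hH, Subgroup.mem_iInf] at this
      exact this j
  -- the subgroup generated by Pt and g is a p-subgroup of N strictly above Pt
  set R : Subgroup G := Pt ⊔ Subgroup.zpowers g with hR
  have hRp : IsPGroup p R :=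
    IsPGroup.to_sup_of_normal_left' (hpgrp _)
      (hQ'p.to_le (Subgroup.zpowers_le.mpr hgQ'))
      (Subgroup.zpowers_le.mpr hgnorm)
  have hRN : R ≤ N := sup_le hSyl.1 (Subgroup.zpowers_le.mpr hgN)
  obtain ⟨k, hk⟩ := IsPGroup.iff_card.mp hRp
  have hdvd : p ^ k ∣ Nat.card N := hk ▸ Subgroup.card_dvd_of_le hRN
  have hkle : k ≤ (Nat.card N).factorization p :=
    (Nat.Prime.pow_dvd_iff_le_factorization (Fact.out) Nat.card_pos.ne').mp hdvd
  have hcardle : Nat.card R ≤ Nat.card Pt := by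
    rw [hk, hSyl.2]
    exact Nat.pow_le_pow_right (Fact.out : p.Prime).pos hkle
  have : Pt = R :=
    Subgroup.eq_of_le_of_card_ge (le_sup_left) hcardle
  exact hgP (this ▸ Subgroup.mem_sup_right (Subgroup.mem_zpowers g))
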